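/- Let F be a field, K a finite Galois extension of F, and L = K × ... × K (n copies) as an F-algebra. For α ∈ Gal(K/F) define σ_α(k_1,...,k_n) = (α(k_1),...,α(k_n)), and define τ(k_1,...,k_n) = (k_n, k_1, ..., k_{n-1}). Let G be the subgroup of Aut_F(L) generated by all σ_α and τ. Then G is isomorphic to Gal(K/F) × Z/nZ and the fixed subalgebra L^G equals the diagonal copy of F. -/

import Mathlib

/-- Remark 2 (2): For a finite Galois extension `K/F` and `L = K × ⋯ × K` (`n` copies),
the group `G` generated by the componentwise Galois actions `σ_α` and the cyclic shift `τ`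
is isomorphic to `Gal(K/F) × ℤ/nℤ`, and the fixed subalgebra `L^G` is the diagonal copy
of `F`. -/
theorem remark_product_galois_algebra
    (F K : Type*) [Field F] [Field K] [Algebra F K] [IsGalois F K] [FiniteDimensional F K]
    (n : ℕ) [NeZero n]
    (σ : (K ≃ₐ[F] K) → ((Fin n → K) ≃ₐ[F] (Fin n → K)))
    (hσ : ∀ (α : K ≃ₐ[F] K) (x : Fin n → K) (i : Fin n), σ α x i = α (x i))
    (τ : (Fin n → K) ≃ₐ[F] (Fin n → K))
    (hτ : ∀ (x : Fin n → K) (i : Fin n), τ x i = x (i - 1)) :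
    Nonempty ((Subgroup.closure (Set.range σ ∪ {τ})) ≃* ((K ≃ₐ[F] K) × Multiplicative (ZMod n))) ∧
    ∀ x : Fin n → K,
      (∀ g ∈ Subgroup.closure (Set.range σ ∪ {τ}), g x = x) ↔
        ∃ t : F, x = fun _ => algebraMap F K t := by
  -- basic computation rules
  have hmul : ∀ (g h : (Fin n → K) ≃ₐ[F] (Fin n → K)) (x : Fin n → K), (g * h) x = g (h x) :=
    fun g h x => rfl
  open Fin.NatCast Fin.CommRing in
  have hτpow : ∀ (m : ℕ) (x : Fin n → K) (i : Fin n), (τ ^ m) x i = x (i - (m : Fin n)) := by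
    intro m
    induction m with
    | zero => intro x i; simp
    | succ m ih =>
      intro x i
      rw [pow_succ, hmul, ih, hτ]
      congr 1
      push_cast
      ring
  open Fin.NatCast Fin.CommRing in
  have hτn : τ ^ n = 1 := by
    apply AlgEquiv.ext; intro x; funext i
    rw [hτpow]
    simp
  have hmod : ∀ a b : ℕ, a % n = b % n → τ ^ a = τ ^ b := by
    intro a b h
    exact pow_eq_pow_iff_modEq.mpr (Nat.ModEq.of_dvd (orderOf_dvd_of_pow_eq_one hτn) h)
  have hσmul : ∀ α β : K ≃ₐ[F] K, σ (α * β) = σ α * σ β := by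
    intro α β; apply AlgEquiv.ext; intro x; funext i
    rw [hmul, hσ, hσ, hσ]; rfl
  have hσone : σ 1 = 1 := by
    apply AlgEquiv.ext; intro x; funext i
    rw [hσ]; rfl
  have hcomm : ∀ (α : K ≃ₐ[F] K) (m : ℕ), σ α * τ ^ m = τ ^ m * σ α := by
    intro α m; apply AlgEquiv.ext; intro x; funext i
    rw [hmul, hmul, hσ, hτpow, hτpow, hσ]
  have hmemσ : ∀ α : K ≃ₐ[F] K, σ α ∈ Set.range σ ∪ {τ} := fun α => Set.mem_union_left _ ⟨α, rfl⟩
  have hmemτ : τ ∈ Set.range σ ∪ {τ} := Set.mem_union_right _ rfl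
  -- the homomorphism
  set φ : (K ≃ₐ[F] K) × Multiplicative (ZMod n) →* ((Fin n → K) ≃ₐ[F] (Fin n → K)) :=
    { toFun := fun p => σ p.1 * τ ^ (Multiplicative.toAdd p.2).val
      map_one' := by simp [hσone]
      map_mul' := by
        intro p q
        simp only [Prod.fst_mul, Prod.snd_mul, hσmul]
        have : τ ^ (Multiplicative.toAdd (p.2 * q.2)).val
            = τ ^ ((Multiplicative.toAdd p.2).val + (Multiplicative.toAdd q.2).val) := by
          apply hmod
          rw [toAdd_mul, ZMod.val_add, Nat.mod_mod_of_dvd _ dvd_rfl]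
        rw [this, pow_add, mul_assoc, mul_assoc]
        congr 1
        rw [← mul_assoc, hcomm, mul_assoc]
    } with hφ
  open Fin.NatCast Fin.CommRing in
  have hφ_apply : ∀ (α : K ≃ₐ[F] K) (a : Multiplicative (ZMod n)) (x : Fin n → K) (i : Fin n),
      φ (α, a) x i = α (x (i - (((Multiplicative.toAdd a).val : ℕ) : Fin n))) := by
    intro α a x i
    show (σ α * τ ^ (Multiplicative.toAdd a).val) x i = _
    rw [hmul, hσ, hτpow]
  -- injectivity
  open Fin.NatCast Fin.CommRing in
  have hinj : Function.Injective φ := by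
    rw [injective_iff_map_eq_one]
    rintro ⟨α, a⟩ h1
    have key : ∀ (x : Fin n → K) (i : Fin n),
        α (x (i - (((Multiplicative.toAdd a).val : ℕ) : Fin n))) = x i := by
      intro x i
      rw [← hφ_apply α a x i, h1]
      rfl
    have hma : (((Multiplicative.toAdd a).val : ℕ) : Fin n) = 0 := by
      by_contra hne
      have hkey := key (Pi.single ((0 : Fin n) - (((Multiplicative.toAdd a).val : ℕ) : Fin n))
        (1 : K)) 0
      rw [Pi.single_eq_same, map_one] at hkey
      rw [Pi.single_eq_of_ne (fun h => hne (sub_eq_self.mp h.symm))] at hkey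
      exact one_ne_zero hkey
    have hval0 : (Multiplicative.toAdd a).val = 0 := by
      have h2 : (Multiplicative.toAdd a).val % n = 0 := by
        have := congrArg Fin.val hma
        rwa [Fin.val_natCast] at this
      rwa [Nat.mod_eq_of_lt (ZMod.val_lt _)] at h2
    have ha : a = 1 := by
      have h3 : Multiplicative.toAdd a = 0 := (ZMod.val_eq_zero _).mp hval0
      exact h3
    have hα : α = 1 := by
      apply AlgEquiv.ext; intro c
      have := key (fun _ => c) 0
      simpa using this
    rw [ha, hα]; rfl
  -- range equals the closure
  have hσ_mem : ∀ α : K ≃ₐ[F] K, σ α ∈ φ.range := by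
    intro α
    exact ⟨(α, 1), by simp [hφ]⟩
  have hτ_mem : τ ∈ φ.range := by
    refine ⟨(1, Multiplicative.ofAdd 1), ?_⟩
    show σ 1 * τ ^ (Multiplicative.toAdd (Multiplicative.ofAdd (1 : ZMod n))).val = τ
    rw [hσone, one_mul, toAdd_ofAdd]
    have : τ ^ (1 : ZMod n).val = τ ^ 1 := by
      apply hmod
      rw [ZMod.val_one_eq_one_mod]
      exact Nat.mod_mod_of_dvd 1 dvd_rfl
    rw [this, pow_one]
  have hrange : Subgroup.closure (Set.range σ ∪ {τ}) = φ.range := by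
    apply le_antisymm
    · rw [Subgroup.closure_le]
      rintro g (⟨α, rfl⟩ | rfl)
      · exact hσ_mem α
      · exact hτ_mem
    · rintro g ⟨⟨α, a⟩, rfl⟩
      show σ α * τ ^ (Multiplicative.toAdd a).val ∈ Subgroup.closure (Set.range σ ∪ {τ})
      exact mul_mem (Subgroup.subset_closure (hmemσ α))
        (pow_mem (Subgroup.subset_closure hmemτ) _)
  constructor
  · exact ⟨(MulEquiv.subgroupCongr hrange).trans (MonoidHom.ofInjective hinj).symm⟩
  · intro x
    constructor
    · intro h
      -- x is constant
      open Fin.NatCast Fin.CommRing in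
      have hconst : ∀ i : Fin n, x i = x 0 := by
        intro i
        have hg : (τ ^ (i.val : ℕ)) ∈ Subgroup.closure (Set.range σ ∪ {τ}) :=
          pow_mem (Subgroup.subset_closure hmemτ) _
        have := congrFun (h _ hg) i
        rw [hτpow, Fin.cast_val_eq_self, sub_self] at this
        exact this.symm
      -- x 0 is fixed by every α
      have hfix : ∀ α : K ≃ₐ[F] K, α (x 0) = x 0 := by
        intro α
        have hg : σ α ∈ Subgroup.closure (Set.range σ ∪ {τ}) :=
          Subgroup.subset_closure (hmemσ α)
        have := congrFun (h _ hg) 0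
        rwa [hσ] at this
      have hbot : IntermediateField.fixedField (⊤ : Subgroup (K ≃ₐ[F] K)) =
          (⊥ : IntermediateField F K) :=
        ((IsGalois.tfae (F := F) (E := K)).out 0 1).mp (inferInstance : IsGalois F K)
      have hx0 : x 0 ∈ (⊥ : IntermediateField F K) := by
        rw [← hbot]
        exact fun g => hfix g.1
      obtain ⟨t, ht⟩ := IntermediateField.mem_bot.mp hx0
      exact ⟨t, funext fun i => by rw [hconst i, ← ht]⟩
    · rintro ⟨t, rfl⟩
      intro g hg
      induction hg using Subgroup.closure_induction with
      | mem s hs =>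
        rcases hs with ⟨α, rfl⟩ | rfl
        · funext i; rw [hσ]; exact α.commutes t
        · funext i; rw [hτ]
      | one => rfl
      | mul g₁ g₂ _ _ ih1 ih2 => rw [hmul, ih2, ih1]
      | inv g₁ _ ih =>
        have : g₁ ((g₁⁻¹) (fun _ => algebraMap F K t)) = g₁ (fun _ => algebraMap F K t) := by
          show (g₁ * g₁⁻¹) (fun _ => algebraMap F K t) = _
          rw [mul_inv_cancel, ih]
          rfl
        exact g₁.injective this
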